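/- Let m > 2 be odd and n ≥ 1, and let G be a group of order 2mn generated by elements a and b satisfying a^m = 1, b^(2n) = 1, and b·a·b⁻¹ = a⁻¹ (the metacyclic group M_{2mn}). Then the characteristic polynomial of the adjacency matrix of the commuting graph Γ_G (over the reals) equals (X + 1)^(2mn − m − n − 1) · (X − (n − 1))^m · (X − (mn − n − 1)); in particular G is commuting integral. -/

import Mathlib

set_option synthInstance.maxHeartbeats 1000000
set_option maxHeartbeats 1000000

open Polynomial

section LA
open Matrix
variable {α : Type*} [Fintype α] [DecidableEq α]

lemma det_smul_one_sub_allOnes {F : Type*} [Field F] [Nonempty α] (s : F) (hs : s ≠ 0) :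
    (s • (1 : Matrix α α F) - Matrix.of (fun _ _ => (1:F))).det
      = s ^ (Fintype.card α - 1) * (s - Fintype.card α) := by
  have h1 : s • (1 : Matrix α α F) - Matrix.of (fun _ _ => (1:F))
      = s • ((1 : Matrix α α F) + Matrix.replicateCol Unit (fun _ => -s⁻¹) * Matrix.replicateRow Unit (fun _ => (1:F))) := by
    ext i j
    simp [Matrix.mul_apply, Matrix.one_apply, smul_add, mul_comm]
    by_cases h : i = j <;> simp [h, hs] <;> field_simp <;> ring
  rw [h1, Matrix.det_smul, Matrix.det_one_add_replicateCol_mul_replicateRow]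
  have hc : 1 ≤ Fintype.card α := Fintype.card_pos
  rw [dotProduct]
  simp only [one_mul]
  rw [Finset.sum_const, Finset.card_univ, nsmul_eq_mul]
  have : s ^ Fintype.card α = s ^ (Fintype.card α - 1) * s := by
    conv_lhs => rw [← Nat.sub_add_cancel hc]
    rw [pow_succ]
  rw [this]
  field_simp
  ring

/-- adjacency matrix of complete graph on α -/
noncomputable def KMat (α : Type*) [DecidableEq α] : Matrix α α ℝ :=
  Matrix.of fun i j => if i = j then 0 else 1

lemma charpoly_KMat [Nonempty α] :
    (KMat α).charpoly = (X + 1) ^ (Fintype.card α - 1) * (X - C ((Fintype.card α : ℝ) - 1)) := by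
  have hcm : charmatrix (KMat α) = ((X:ℝ[X]) + 1) • (1 : Matrix α α ℝ[X]) - Matrix.of (fun _ _ => (1:ℝ[X])) := by
    ext i j
    by_cases h : i = j <;>
      simp [charmatrix_apply, KMat, Matrix.one_apply, h, Matrix.diagonal_apply]
  rw [Matrix.charpoly, hcm]
  set f : ℝ[X] →+* RatFunc ℝ := algebraMap ℝ[X] (RatFunc ℝ) with hf
  have hinj : Function.Injective f := IsFractionRing.injective ℝ[X] (RatFunc ℝ)
  apply hinj
  rw [RingHom.map_det, RingHom.mapMatrix_apply]
  have hmap : (((X:ℝ[X]) + 1) • (1 : Matrix α α ℝ[X]) - Matrix.of (fun _ _ => (1:ℝ[X]))).map f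
      = (f ((X:ℝ[X])+1)) • (1 : Matrix α α (RatFunc ℝ)) - Matrix.of (fun _ _ => (1:RatFunc ℝ)) := by
    ext i j
    by_cases h : i = j <;> simp [Matrix.one_apply, h]
  have hs0 : f ((X:ℝ[X]) + 1) ≠ 0 := by
    intro h
    have h2 : ((X:ℝ[X]) + 1) = 0 := hinj (by simp [h])
    have := Polynomial.X_add_C_ne_zero (R := ℝ) 1
    simp only [Polynomial.C_1] at this
    exact this h2
  rw [hmap, det_smul_one_sub_allOnes _ hs0]
  have hC : (X - C ((Fintype.card α:ℝ)-1) : ℝ[X]) = ((X:ℝ[X]) + 1) - (Fintype.card α : ℝ[X]) := by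
    rw [Polynomial.C_sub, Polynomial.C_1, Polynomial.C_eq_natCast]
    ring
  rw [hC, _root_.map_mul, map_pow, map_sub, map_natCast]

lemma charpoly_blockDiagonal {o : Type*} [Fintype o] [DecidableEq o]
    (M : o → Matrix α α ℝ) :
    (Matrix.blockDiagonal M).charpoly = ∏ i, (M i).charpoly := by
  have h : charmatrix (Matrix.blockDiagonal M)
      = Matrix.blockDiagonal (fun i => charmatrix (M i)) := by
    ext ⟨i, k⟩ ⟨j, l⟩
    by_cases hkl : k = l
    · subst hkl
      by_cases hij : i = j <;>
        simp [charmatrix_apply, Matrix.blockDiagonal_apply, hij, Matrix.diagonal_apply]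
    · simp [charmatrix_apply, Matrix.blockDiagonal_apply, hkl, Matrix.diagonal_apply,
        Prod.ext_iff]
  rw [Matrix.charpoly, h, Matrix.det_blockDiagonal]
  rfl

end LA

namespace MetaAux

variable {G : Type*} [Group G] {a b : G}

lemma hba (hrel : b * a * b⁻¹ = a⁻¹) : b * a = a⁻¹ * b := by
  rw [← hrel]; group

lemma hbainv (hrel : b * a * b⁻¹ = a⁻¹) : b * a⁻¹ = a * b := by
  have h : b * a⁻¹ * b⁻¹ = a := by
    rw [show b * a⁻¹ * b⁻¹ = (b * a * b⁻¹)⁻¹ by group, hrel, inv_inv]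
  calc b * a⁻¹ = (b * a⁻¹ * b⁻¹) * b := by group
    _ = a * b := by rw [h]

lemma hcomm2 (hrel : b * a * b⁻¹ = a⁻¹) : Commute a (b ^ (2:ℤ)) := by
  show a * b ^ (2:ℤ) = b ^ (2:ℤ) * a
  have h2 : (b : G) ^ (2:ℤ) = b * b := by
    rw [show (2:ℤ) = (2:ℕ) by norm_num, zpow_natCast, pow_two]
  rw [h2]
  calc a * (b * b) = (a * b) * b := by rw [mul_assoc]
    _ = (b * a⁻¹) * b := by rw [hbainv hrel]
    _ = b * (a⁻¹ * b) := by rw [mul_assoc]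
    _ = b * (b * a) := by rw [← hba hrel]
    _ = b * b * a := by rw [mul_assoc]

lemma conj_zpow (hrel : b * a * b⁻¹ = a⁻¹) (k : ℤ) : b * a ^ k * b⁻¹ = a ^ (-k) := by
  have h : (MulAut.conj b) (a ^ k) = ((MulAut.conj b) a) ^ k := map_zpow _ _ _
  simp only [MulAut.conj_apply] at h
  rw [h, hrel, inv_zpow, zpow_neg]

lemma conj_zpow_zpow (hrel : b * a * b⁻¹ = a⁻¹) (j k : ℤ) :
    b ^ j * a ^ k * (b ^ j)⁻¹ = a ^ (if Even j then k else -k) := by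
  rcases Int.even_or_odd j with ⟨q, hq⟩ | ⟨q, hq⟩
  · have hj : Even j := ⟨q, hq⟩
    rw [if_pos hj]
    have hbj : (b:G) ^ j = (b ^ (2:ℤ)) ^ q := by
      rw [← zpow_mul, hq]; ring_nf
    have hc : Commute (a ^ k) ((b ^ (2:ℤ)) ^ q) := (hcomm2 hrel).zpow_zpow k q
    rw [hbj, ← hc.eq]; group
  · have hj : ¬ Even j := by simp [hq, parity_simps]
    rw [if_neg hj]
    have hbj : (b:G) ^ j = (b ^ (2:ℤ)) ^ q * b := by
      rw [hq, zpow_add, zpow_mul, zpow_one]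
    have hc : Commute (a ^ (-k)) ((b ^ (2:ℤ)) ^ q) := (hcomm2 hrel).zpow_zpow (-k) q
    calc b ^ j * a ^ k * (b ^ j)⁻¹
        = (b ^ (2:ℤ)) ^ q * (b * a ^ k * b⁻¹) * ((b ^ (2:ℤ)) ^ q)⁻¹ := by rw [hbj]; group
      _ = (b ^ (2:ℤ)) ^ q * a ^ (-k) * ((b ^ (2:ℤ)) ^ q)⁻¹ := by rw [conj_zpow hrel]
      _ = a ^ (-k) := by rw [← hc.eq]; group

/-- multiplication rule in integer coordinates -/
lemma mul_rule (hrel : b * a * b⁻¹ = a⁻¹) (i j k l : ℤ) :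
    (a ^ i * b ^ j) * (a ^ k * b ^ l)
      = a ^ (i + (if Even j then k else -k)) * b ^ (j + l) := by
  have h := conj_zpow_zpow hrel j k
  calc (a ^ i * b ^ j) * (a ^ k * b ^ l)
      = a ^ i * (b ^ j * a ^ k * (b ^ j)⁻¹) * (b ^ j * b ^ l) := by group
    _ = a ^ i * a ^ (if Even j then k else -k) * (b ^ j * b ^ l) := by rw [h]
    _ = a ^ (i + (if Even j then k else -k)) * b ^ (j + l) := by
        rw [← zpow_add, ← zpow_add]

lemma surj_form (hrel : b * a * b⁻¹ = a⁻¹)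
    (hgen : Subgroup.closure ({a, b} : Set G) = ⊤) (g : G) :
    ∃ i j : ℤ, g = a ^ i * b ^ j := by
  let S : Subgroup G :=
    { carrier := {g | ∃ i j : ℤ, g = a ^ i * b ^ j}
      one_mem' := ⟨0, 0, by simp⟩
      mul_mem' := by
        rintro x y ⟨i, j, rfl⟩ ⟨k, l, rfl⟩
        exact ⟨i + (if Even j then k else -k), j + l, mul_rule hrel i j k l⟩
      inv_mem' := by
        rintro x ⟨i, j, rfl⟩
        refine ⟨if Even (-j) then -i else i, -j, ?_⟩
        have h := conj_zpow_zpow hrel (-j) (-i)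
        have : (if Even (-j) then -i else i) = (if Even (-j) then (-i) else -(-i)) := by
          by_cases hj : Even (-j) <;> simp [hj]
        rw [this, ← h]
        group }
  have hS : Subgroup.closure ({a, b} : Set G) ≤ S := by
    rw [Subgroup.closure_le]
    rintro x (rfl | rfl)
    · exact ⟨1, 0, by simp⟩
    · exact ⟨0, 1, by simp⟩
  rw [hgen] at hS
  exact hS (Subgroup.mem_top g)

/-- powers of a only depend on the exponent mod m, if a^m = 1 -/
lemma zpow_eq_mod {m : ℕ} [NeZero m] (ha : a ^ m = 1) (i : ℤ) :
    a ^ i = a ^ (((i : ZMod m).val : ℤ)) := by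
  have hmod : ((((i : ZMod m).val : ℤ)) : ZMod m) = (i : ZMod m) := by
    push_cast
    rw [ZMod.natCast_val, ZMod.cast_id]
  have hdvd : (m : ℤ) ∣ i - ((i : ZMod m).val : ℤ) :=
    ((ZMod.intCast_eq_intCast_iff _ _ _).mp hmod).dvd
  obtain ⟨t, ht⟩ := hdvd
  set v : ℤ := ((i : ZMod m).val : ℤ) with hv
  have hm : a ^ ((m:ℕ):ℤ) = 1 := by rw [zpow_natCast, ha]
  calc a ^ i = a ^ (v + (m:ℤ) * t) := by
        rw [show i = v + (m:ℤ) * t from by linarith]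
    _ = a ^ v * (a ^ ((m:ℕ):ℤ)) ^ t := by rw [zpow_add, zpow_mul]
    _ = a ^ v := by rw [hm]; simp

open scoped Classical

/-- simplified commuting condition -/
def SCond (m n : ℕ) (p q : ZMod m × ZMod (2*n)) : Prop :=
  (Even p.2.val ∧ Even q.2.val) ∨ (¬ Even p.2.val ∧ ¬ Even q.2.val ∧ p.1 = q.1)

abbrev Vm (m n : ℕ) := {p : ZMod m × ZMod (2*n) // ¬ (p.1 = 0 ∧ Even p.2.val)}

noncomputable def modelMat (m n : ℕ) : Matrix (Vm m n) (Vm m n) ℝ :=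
  Matrix.of fun p q => if p ≠ q ∧ SCond m n p.1 q.1 then 1 else 0

noncomputable def evenEquiv (n : ℕ) (hn : 1 ≤ n) :
    Fin n ≃ {j : ZMod (2*n) // Even j.val} where
  toFun k := ⟨((2*(k:ℕ) : ℕ) : ZMod (2*n)), by
    rw [ZMod.val_natCast_of_lt (by omega)]; exact ⟨k, by ring⟩⟩
  invFun j := ⟨j.1.val / 2, by
    haveI : NeZero (2*n) := ⟨by omega⟩
    have := ZMod.val_lt j.1
    omega⟩
  left_inv k := by
    ext
    show ((2*(k:ℕ) : ℕ) : ZMod (2*n)).val / 2 = k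
    rw [ZMod.val_natCast_of_lt (by omega)]
    omega
  right_inv j := by
    haveI : NeZero (2*n) := ⟨by omega⟩
    obtain ⟨t, ht⟩ := j.2
    ext
    show ((2*(j.1.val/2) : ℕ) : ZMod (2*n)) = j.1
    rw [show 2*(j.1.val/2) = j.1.val from by omega, ZMod.natCast_val, ZMod.cast_id]

noncomputable def oddEquiv (n : ℕ) (hn : 1 ≤ n) :
    Fin n ≃ {j : ZMod (2*n) // ¬ Even j.val} where
  toFun k := ⟨((2*(k:ℕ)+1 : ℕ) : ZMod (2*n)), by
    rw [ZMod.val_natCast_of_lt (by omega)]; simp [parity_simps]⟩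
  invFun j := ⟨j.1.val / 2, by
    haveI : NeZero (2*n) := ⟨by omega⟩
    have := ZMod.val_lt j.1
    omega⟩
  left_inv k := by
    ext
    show ((2*(k:ℕ)+1 : ℕ) : ZMod (2*n)).val / 2 = k
    rw [ZMod.val_natCast_of_lt (by omega)]
    omega
  right_inv j := by
    haveI : NeZero (2*n) := ⟨by omega⟩
    have hodd := j.2
    rw [Nat.not_even_iff_odd] at hodd
    obtain ⟨t, ht⟩ := hodd
    ext
    show ((2*(j.1.val/2)+1 : ℕ) : ZMod (2*n)) = j.1
    rw [show 2*(j.1.val/2)+1 = j.1.val from by omega, ZMod.natCast_val, ZMod.cast_id]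

variable (a b) in
noncomputable def phi (m n : ℕ) : ZMod m × ZMod (2*n) → G :=
  fun p => a ^ ((p.1.val : ℤ)) * b ^ ((p.2.val : ℤ))

lemma phi_surj {m n : ℕ} [NeZero m] [NeZero (2*n)]
    (ha : a ^ m = 1) (hb : b ^ (2*n) = 1) (hrel : b * a * b⁻¹ = a⁻¹)
    (hgen : Subgroup.closure ({a, b} : Set G) = ⊤) :
    Function.Surjective (phi a b m n) := by
  intro g
  obtain ⟨i, j, rfl⟩ := surj_form hrel hgen g
  exact ⟨((i : ZMod m), (j : ZMod (2*n))),
    by rw [phi, ← zpow_eq_mod ha i, ← zpow_eq_mod hb j]⟩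

lemma zpow_coord {m : ℕ} [NeZero m] (ha : a ^ m = 1) (u : ZMod m) (I : ℤ)
    (h : (I : ZMod m) = u) : a ^ I = a ^ ((u.val : ℤ)) := by
  rw [zpow_eq_mod ha I, h]

lemma phi_mul {m n : ℕ} [NeZero m] [NeZero (2*n)]
    (ha : a ^ m = 1) (hb : b ^ (2*n) = 1) (hrel : b * a * b⁻¹ = a⁻¹)
    (p q : ZMod m × ZMod (2*n)) :
    phi a b m n p * phi a b m n q
      = phi a b m n (p.1 + (if Even p.2.val then q.1 else -q.1), p.2 + q.2) := by
  show (a ^ ((p.1.val : ℤ)) * b ^ ((p.2.val : ℤ))) * (a ^ ((q.1.val : ℤ)) * b ^ ((q.2.val : ℤ)))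
      = a ^ (((p.1 + (if Even p.2.val then q.1 else -q.1)).val : ℤ))
        * b ^ (((p.2 + q.2).val : ℤ))
  rw [mul_rule hrel]
  congr 1
  · refine zpow_coord ha _ _ ?_
    have hpar : Even ((p.2.val : ℤ)) ↔ Even p.2.val := Int.even_coe_nat _
    by_cases hj : Even p.2.val
    · rw [if_pos (hpar.mpr hj), if_pos hj]
      push_cast
      rw [ZMod.natCast_val, ZMod.natCast_val, ZMod.cast_id, ZMod.cast_id]
    · rw [if_neg (fun h => hj (hpar.mp h)), if_neg hj]
      push_cast
      rw [ZMod.natCast_val, ZMod.natCast_val, ZMod.cast_id, ZMod.cast_id]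
  · refine zpow_coord hb _ _ ?_
    push_cast
    rw [ZMod.natCast_val, ZMod.natCast_val, ZMod.cast_id, ZMod.cast_id]

lemma phi_comm_iff {m n : ℕ} [NeZero m] [NeZero (2*n)]
    (ha : a ^ m = 1) (hb : b ^ (2*n) = 1) (hrel : b * a * b⁻¹ = a⁻¹)
    (hinj : Function.Injective (phi a b m n)) (p q : ZMod m × ZMod (2*n)) :
    phi a b m n p * phi a b m n q = phi a b m n q * phi a b m n p
      ↔ p.1 + (if Even p.2.val then q.1 else -q.1)
          = q.1 + (if Even q.2.val then p.1 else -p.1) := by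
  rw [phi_mul ha hb hrel, phi_mul ha hb hrel]
  constructor
  · intro h
    exact (Prod.ext_iff.mp (hinj h)).1
  · intro h
    exact congrArg _ (Prod.ext h (add_comm _ _))

lemma cancel_two {m : ℕ} (hmodd : Odd m) {x y : ZMod m} (h : 2 * x = 2 * y) : x = y := by
  have hu : IsUnit (2 : ZMod m) := by
    rw [show ((2 : ZMod m)) = ((2:ℕ) : ZMod m) by push_cast; rfl, ZMod.isUnit_iff_coprime]
    exact Nat.coprime_two_left.mpr hmodd
  exact hu.mul_left_cancel h

lemma crit_iff_scond {m n : ℕ} (hm : 2 < m) (hmodd : Odd m)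
    {p q : ZMod m × ZMod (2*n)}
    (hp : ¬ (p.1 = 0 ∧ Even p.2.val)) (hq : ¬ (q.1 = 0 ∧ Even q.2.val)) :
    (p.1 + (if Even p.2.val then q.1 else -q.1)
        = q.1 + (if Even q.2.val then p.1 else -p.1))
      ↔ SCond m n p q := by
  haveI : NeZero m := ⟨by omega⟩
  by_cases h1 : Even p.2.val <;> by_cases h2 : Even q.2.val <;>
    simp only [SCond, if_pos, if_neg, h1, h2, if_true, if_false, not_true, not_false_iff,
      true_and, false_and, and_true, and_false, false_or, or_false, iff_true, iff_false]
  · simp [add_comm]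
  · intro h
    exact hp ⟨cancel_two hmodd (show 2 * p.1 = 2 * 0 by linear_combination h), h1⟩
  · intro h
    exact hq ⟨cancel_two hmodd (show 2 * q.1 = 2 * 0 by linear_combination -h), h2⟩
  · constructor
    · intro h
      exact cancel_two hmodd (by linear_combination h)
    · intro h
      rw [h]

abbrev Am (m n : ℕ) := {i : ZMod m // i ≠ 0} × {j : ZMod (2*n) // Even j.val}
abbrev Bm (n : ℕ) := {j : ZMod (2*n) // ¬ Even j.val}

def wEquiv (m n : ℕ) : (Am m n ⊕ (Bm n × ZMod m)) ≃ Vm m n where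
  toFun x := match x with
    | Sum.inl (i, j) => ⟨(i.1, j.1), fun h => i.2 h.1⟩
    | Sum.inr (j, i) => ⟨(i, j.1), fun h => j.2 h.2⟩
  invFun p :=
    if h : Even p.1.2.val then
      Sum.inl (⟨p.1.1, fun h0 => p.2 ⟨h0, h⟩⟩, ⟨p.1.2, h⟩)
    else Sum.inr (⟨p.1.2, h⟩, p.1.1)
  left_inv x := by
    rcases x with ⟨i, j⟩ | ⟨j, i⟩
    · simp [j.2]
    · simp [j.2]
  right_inv p := by
    by_cases h : Even p.1.2.val
    · simp [h]
    · simp [h]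

lemma modelMat_eq (m n : ℕ) :
    modelMat m n = Matrix.reindex (wEquiv m n) (wEquiv m n)
      (Matrix.fromBlocks (KMat (Am m n)) 0 0
        (Matrix.blockDiagonal (fun _ : ZMod m => KMat (Bm n)))) := by
  ext p q
  obtain ⟨x, rfl⟩ := (wEquiv m n).surjective p
  obtain ⟨y, rfl⟩ := (wEquiv m n).surjective q
  rw [Matrix.reindex_apply, Matrix.submatrix_apply, Equiv.symm_apply_apply,
    Equiv.symm_apply_apply]
  have hne : (wEquiv m n x ≠ wEquiv m n y) ↔ x ≠ y := by
    simp [Equiv.apply_eq_iff_eq]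
  rcases x with ⟨i, j⟩ | ⟨j, i⟩ <;> rcases y with ⟨i', j'⟩ | ⟨j', i'⟩
  · -- inl inl
    show (if (wEquiv m n (Sum.inl (i, j)) ≠ wEquiv m n (Sum.inl (i', j'))) ∧ SCond m n (i.1, j.1) (i'.1, j'.1) then (1:ℝ) else 0) = _
    have hsc : SCond m n (i.1, j.1) (i'.1, j'.1) := Or.inl ⟨j.2, j'.2⟩
    rw [Matrix.fromBlocks_apply₁₁]
    show _ = (if (i, j) = (i', j') then (0:ℝ) else 1)
    by_cases hxy : (Sum.inl (i, j) : Am m n ⊕ (Bm n × ZMod m)) = Sum.inl (i', j')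
    · rw [if_neg, if_pos (show (i, j) = (i', j') by simpa using hxy)]
      rw [not_and_or]
      left
      simpa using (hne.not_left.mp (by simpa using hxy) : _)
    · rw [if_pos (show _ ∧ SCond m n (i.1, j.1) (i'.1, j'.1) from ⟨hne.mpr hxy, hsc⟩),
        if_neg (show ¬ (i, j) = (i', j') by simpa using hxy)]
  · -- inl inr
    show (if (wEquiv m n (Sum.inl (i, j)) ≠ wEquiv m n (Sum.inr (j', i'))) ∧ SCond m n (i.1, j.1) (i', j'.1) then (1:ℝ) else 0) = _
    rw [Matrix.fromBlocks_apply₁₂]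
    rw [if_neg]
    · rfl
    rintro ⟨-, hsc⟩
    rcases hsc with ⟨-, h⟩ | ⟨h, -⟩
    · exact j'.2 h
    · exact h j.2
  · -- inr inl
    show (if (wEquiv m n (Sum.inr (j, i)) ≠ wEquiv m n (Sum.inl (i', j'))) ∧ SCond m n (i, j.1) (i'.1, j'.1) then (1:ℝ) else 0) = _
    rw [Matrix.fromBlocks_apply₂₁]
    rw [if_neg]
    · rfl
    rintro ⟨-, hsc⟩
    rcases hsc with ⟨h, -⟩ | ⟨-, h, -⟩
    · exact j.2 h
    · exact h j'.2
  · -- inr inr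
    show (if (wEquiv m n (Sum.inr (j, i)) ≠ wEquiv m n (Sum.inr (j', i'))) ∧ SCond m n (i, j.1) (i', j'.1) then (1:ℝ) else 0) = _
    rw [Matrix.fromBlocks_apply₂₂, Matrix.blockDiagonal_apply]
    by_cases hi : i = i'
    · rw [if_pos hi]
      show _ = (if j = j' then (0:ℝ) else 1)
      by_cases hj : j = j'
      · rw [if_neg, if_pos hj]
        rw [not_and_or]
        left
        simp [hi, hj]
      · rw [if_pos (show _ ∧ SCond m n (i, j.1) (i', j'.1) from ⟨hne.mpr (by simp [hj]), Or.inr ⟨j.2, j'.2, hi⟩⟩), if_neg hj]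
    · rw [if_neg hi, if_neg]
      rintro ⟨-, hsc⟩
      rcases hsc with ⟨h, -⟩ | ⟨-, -, h⟩
      · exact j.2 h
      · exact hi h

lemma modelMat_charpoly (m n : ℕ) [NeZero m] [NeZero (2*n)] (hm : 2 < m) (hmodd : Odd m) (hn : 1 ≤ n) :
    (modelMat m n).charpoly
      = (X + 1) ^ (2*m*n - m - n - 1) * (X - C ((n:ℝ) - 1)) ^ m
        * (X - C ((m:ℝ)*n - n - 1)) := by
  haveI : Fact (1 < m) := ⟨by omega⟩
  haveI hA : Nonempty (Am m n) :=
    ⟨⟨⟨1, one_ne_zero⟩, ⟨0, by simp⟩⟩⟩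
  haveI hB : Nonempty (Bm n) := ⟨oddEquiv n hn ⟨0, by omega⟩⟩
  rw [modelMat_eq, Matrix.charpoly_reindex, Matrix.charpoly_fromBlocks_zero₁₂,
    charpoly_blockDiagonal, charpoly_KMat, charpoly_KMat, Finset.prod_const,
    Finset.card_univ, ZMod.card]
  have cA : Fintype.card (Am m n) = (m-1) * n := by
    rw [Fintype.card_prod]
    congr 1
    · rw [Fintype.card_subtype_compl, ZMod.card, Fintype.card_subtype_eq]
    · rw [← Fintype.card_congr (evenEquiv n hn), Fintype.card_fin]
  have cB : Fintype.card (Bm n) = n := by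
    rw [← Fintype.card_congr (oddEquiv n hn), Fintype.card_fin]
  rw [cA, cB]
  have e1 : ((((m-1)*n : ℕ)) : ℝ) - 1 = (m:ℝ)*n - n - 1 := by
    rw [Nat.cast_mul, Nat.cast_sub (by omega : 1 ≤ m)]
    ring
  rw [e1]
  have e2 : (m-1)*n - 1 + (n-1)*m = 2*m*n - m - n - 1 := by
    have h1 : (m-1)*n = m*n - n := by rw [Nat.sub_mul, one_mul]
    have h2 : (n-1)*m = n*m - m := by rw [Nat.sub_mul, one_mul]
    have h3 : n + 1 ≤ m * n := le_trans (by omega) (Nat.mul_le_mul_right n (by omega : 3 ≤ m))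
    have h4 : m ≤ m * n := Nat.le_mul_of_pos_right m (by omega)
    have h5 : n * m = m * n := Nat.mul_comm n m
    have h6 : 2*m*n = 2*(m*n) := by ring
    rw [h1, h2, h5, h6]
    omega
  calc (X + 1) ^ ((m-1)*n - 1) * (X - C ((m:ℝ)*n - n - 1))
        * ((X + 1) ^ (n - 1) * (X - C ((n:ℝ) - 1))) ^ m
      = (X + 1) ^ ((m-1)*n - 1 + (n-1)*m) * (X - C ((n:ℝ) - 1)) ^ m
        * (X - C ((m:ℝ)*n - n - 1)) := by
        rw [mul_pow, ← pow_mul]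
        ring
    _ = _ := by rw [e2]

end MetaAux

/-- The commuting graph of a group `G`: vertices are the non-central elements,
two distinct vertices are adjacent iff they commute. -/
def commutingGraph (G : Type*) [Group G] : SimpleGraph {x : G // x ∉ Subgroup.center G} where
  Adj x y := x ≠ y ∧ (x : G) * y = (y : G) * x
  symm := ⟨by rintro x y ⟨hne, hc⟩; exact ⟨hne.symm, hc.symm⟩⟩
  loopless := ⟨by rintro x ⟨hne, _⟩; exact hne rfl⟩

open scoped Classical in
/-- The characteristic polynomial (over `ℝ`) of the adjacency matrix of the
commuting graph of `G`. -/
noncomputable def commCharpoly (G : Type*) [Group G] [Fintype G] : Polynomial ℝ :=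
  ((commutingGraph G).adjMatrix ℝ).charpoly

theorem commuting_integral_metacyclic_odd
    (m n : ℕ) (hm : 2 < m) (hmodd : Odd m) (hn : 1 ≤ n)
    (G : Type*) [Group G] [Fintype G] (a b : G)
    (hcard : Nat.card G = 2 * m * n)
    (ha : a ^ m = 1) (hb : b ^ (2 * n) = 1) (hrel : b * a * b⁻¹ = a⁻¹)
    (hgen : Subgroup.closure ({a, b} : Set G) = ⊤) :
    commCharpoly G =
        (X + 1) ^ (2 * m * n - m - n - 1) *
          (X - C ((n : ℝ) - 1)) ^ m *
          (X - C ((m : ℝ) * n - n - 1)) ∧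
      ∀ μ : ℝ, (commCharpoly G).IsRoot μ → ∃ k : ℤ, μ = (k : ℝ) := by
  classical
  haveI : NeZero m := ⟨by omega⟩
  haveI : NeZero (2*n) := ⟨by omega⟩
  haveI : Fact (1 < m) := ⟨by omega⟩
  haveI : Fact (1 < 2*n) := ⟨by omega⟩
  have hsurj := MetaAux.phi_surj ha hb hrel hgen
  have hbij : Function.Bijective (MetaAux.phi a b m n) := by
    rw [Fintype.bijective_iff_surjective_and_card]
    refine ⟨hsurj, ?_⟩
    rw [Fintype.card_prod, ZMod.card, ZMod.card, ← Nat.card_eq_fintype_card, hcard]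
    ring
  have hinj := hbij.injective
  have hcomm := MetaAux.phi_comm_iff ha hb hrel hinj
  have hcenter : ∀ p, MetaAux.phi a b m n p ∈ Subgroup.center G
      ↔ (p.1 = 0 ∧ Even p.2.val) := by
    intro p
    rw [Subgroup.mem_center_iff]
    constructor
    · intro h
      have h1 : MetaAux.phi a b m n ((1 : ZMod m), (0 : ZMod (2*n)))
          * MetaAux.phi a b m n p
          = MetaAux.phi a b m n p * MetaAux.phi a b m n (1, 0) := h _
      have h2 : MetaAux.phi a b m n ((0 : ZMod m), (1 : ZMod (2*n)))
          * MetaAux.phi a b m n p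
          = MetaAux.phi a b m n p * MetaAux.phi a b m n (0, 1) := h _
      rw [hcomm] at h1 h2
      simp only [ZMod.val_zero, Even.zero, if_pos] at h1
      rw [show ((0:ZMod (2*n)), (1:ZMod (2*n))).2.val = 1 from ZMod.val_one _] at h2
      rw [if_neg Nat.not_even_one] at h2
      have hz : (if Even p.2.val then (0:ZMod m) else -0) = 0 := by split_ifs <;> simp
      rw [hz] at h2
      have hp1 : p.1 = 0 := by
        refine MetaAux.cancel_two hmodd (show 2 * p.1 = 2 * 0 by linear_combination -h2)
      refine ⟨hp1, ?_⟩
      by_contra hev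
      rw [if_neg hev] at h1
      have h20 : (2 : ZMod m) * 1 = 2 * 0 := by linear_combination h1
      have := MetaAux.cancel_two hmodd h20
      simp at this
    · rintro ⟨hp1, hp2⟩ g
      obtain ⟨q, rfl⟩ := hsurj g
      rw [hcomm, hp1, if_pos hp2]
      split_ifs <;> simp
  let e : (ZMod m × ZMod (2*n)) ≃ G := Equiv.ofBijective _ hbij
  let e' : MetaAux.Vm m n ≃ {x : G // x ∉ Subgroup.center G} :=
    e.subtypeEquiv (fun p => (not_congr (hcenter p)).symm)
  have hAdj : (commutingGraph G).adjMatrix ℝ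
      = Matrix.reindex e' e' (MetaAux.modelMat m n) := by
    ext x y
    obtain ⟨p, rfl⟩ := e'.surjective x
    obtain ⟨q, rfl⟩ := e'.surjective y
    rw [Matrix.reindex_apply, Matrix.submatrix_apply, Equiv.symm_apply_apply,
      Equiv.symm_apply_apply, SimpleGraph.adjMatrix_apply]
    show _ = (if p ≠ q ∧ MetaAux.SCond m n p.1 q.1 then (1:ℝ) else 0)
    refine if_congr ?_ rfl rfl
    have hne : (e' p ≠ e' q) ↔ p ≠ q := by
      simp [EmbeddingLike.apply_eq_iff_eq]
    have hcoe : ∀ r : MetaAux.Vm m n, ((e' r : {x : G // x ∉ Subgroup.center G}) : G)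
        = MetaAux.phi a b m n r.1 := fun r => rfl
    show ((e' p ≠ e' q) ∧ ((e' p : G) * (e' q : G) = (e' q : G) * (e' p : G))) ↔ _
    rw [hne, hcoe, hcoe, hcomm, MetaAux.crit_iff_scond hm hmodd p.2 q.2]
  have hmain : commCharpoly G =
      (X + 1) ^ (2 * m * n - m - n - 1) * (X - C ((n : ℝ) - 1)) ^ m *
        (X - C ((m : ℝ) * n - n - 1)) := by
    show ((commutingGraph G).adjMatrix ℝ).charpoly = _
    rw [hAdj, Matrix.charpoly_reindex, MetaAux.modelMat_charpoly m n hm hmodd hn]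
  refine ⟨hmain, ?_⟩
  intro μ hroot
  rw [IsRoot, hmain] at hroot
  simp only [eval_mul, eval_pow, eval_add, eval_sub, eval_X, eval_C, eval_one,
    mul_eq_zero, pow_eq_zero_iff'] at hroot
  rcases hroot with (⟨h, -⟩ | ⟨h, -⟩) | h
  · exact ⟨-1, by push_cast; linarith⟩
  · exact ⟨(n : ℤ) - 1, by push_cast; linarith⟩
  · exact ⟨(m : ℤ) * n - n - 1, by push_cast; linarith⟩
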